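/- Let φ ∈ R^n and χ ∈ R^k be probability vectors with positive entries and n, k ≥ 2. Suppose there exists at least one ψ ∈ R^n strictly majorized by φ. If for every ψ strictly majorized by φ the tensor product ψ ⊗ χ is strictly majorized by φ ⊗ χ, then l_u(χ) > g_u(φ). -/

import Mathlib

open Finset

/-- `eSum v m` is the sum of the `m` largest entries of `v`
(the supremum of sums over subsets of cardinality `m`). -/
noncomputable def eSum {ι : Type} [Fintype ι] (v : ι → ℝ) (m : ℕ) : ℝ :=
  sSup {x | ∃ s : Finset ι, s.card = m ∧ x = ∑ i ∈ s, v i}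

/-- Majorization `x ≺ y`: partial sums of largest entries of `x` are dominated
by those of `y`, with equal total sums. -/
def Maj {ι κ : Type} [Fintype ι] [Fintype κ] (x : ι → ℝ) (y : κ → ℝ) : Prop :=
  (∀ m : ℕ, 1 ≤ m → m < Fintype.card ι → eSum x m ≤ eSum y m) ∧
    ∑ i, x i = ∑ j, y j

/-- Strict majorization `x ◁ y`: all inequalities strict, total sums equal. -/
def SMaj {ι κ : Type} [Fintype ι] [Fintype κ] (x : ι → ℝ) (y : κ → ℝ) : Prop :=
  (∀ m : ℕ, 1 ≤ m → m < Fintype.card ι → eSum x m < eSum y m) ∧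
    ∑ i, x i = ∑ j, y j

/-- Global uniformity: smallest entry divided by largest entry. -/
noncomputable def gu {ι : Type} [Fintype ι] (v : ι → ℝ) : ℝ :=
  sInf (Set.range v) / sSup (Set.range v)

/-- The set of ratios `v b / v a` over consecutive distinct values `v b < v a`
(no value strictly in between). -/
def ratioSet {ι : Type} [Fintype ι] (v : ι → ℝ) : Set ℝ :=
  {r | ∃ a b : ι, v b < v a ∧ (¬ ∃ c : ι, v b < v c ∧ v c < v a) ∧ r = v b / v a}

open Classical in
noncomputable def lu {ι : Type} [Fintype ι] (v : ι → ℝ) : ℝ :=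
  if (∃ a b : ι, v a ≠ v b) then sInf (ratioSet v) else 1

open Classical in
/-- Maximal local uniformity: maximum ratio of consecutive distinct values;
`1` for a constant vector. -/
noncomputable def Lu {ι : Type} [Fintype ι] (v : ι → ℝ) : ℝ :=
  if (∃ a b : ι, v a ≠ v b) then sSup (ratioSet v) else 1

/-- Tensor (Kronecker) product of two vectors. -/
def tens {ι κ : Type} (x : ι → ℝ) (y : κ → ℝ) : ι × κ → ℝ :=
  fun p => x p.1 * y p.2

/-- `k`-fold tensor power of a vector. -/
def tpow {n : ℕ} (v : Fin n → ℝ) (k : ℕ) : (Fin k → Fin n) → ℝ :=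
  fun f => ∏ i, v (f i)

/-- A probability vector: nonnegative entries summing to one. -/
def IsProb {ι : Type} [Fintype ι] (v : ι → ℝ) : Prop :=
  (∀ i, 0 ≤ v i) ∧ ∑ i, v i = 1

/-- `v` sorted in non-increasing order. -/
noncomputable def sortDesc {n : ℕ} (v : Fin n → ℝ) : Fin n → ℝ :=
  fun i => v (Tuple.sort v i.rev)

/-- Shannon entropy (base 2), with the convention `0 log 0 = 0`. -/
noncomputable def entH {ι : Type} [Fintype ι] (v : ι → ℝ) : ℝ :=
  -∑ i, v i * Real.logb 2 (v i)


lemma eSumSet_finite {ι : Type} [Fintype ι] (v : ι → ℝ) (m : ℕ) :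
    {x | ∃ s : Finset ι, s.card = m ∧ x = ∑ i ∈ s, v i}.Finite := by
  apply Set.Finite.subset (Set.finite_range fun s : Finset ι => ∑ i ∈ s, v i)
  rintro x ⟨s, _, rfl⟩; exact ⟨s, rfl⟩

lemma le_eSum {ι : Type} [Fintype ι] (v : ι → ℝ) (s : Finset ι) :
    ∑ i ∈ s, v i ≤ eSum v s.card :=
  le_csSup (eSumSet_finite v s.card).bddAbove ⟨s, rfl, rfl⟩

lemma sum_le_sum_of_threshold {ι : Type} [Fintype ι] [DecidableEq ι] (v : ι → ℝ) (A s : Finset ι) (θ : ℝ)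
    (hA : ∀ i ∈ A, θ ≤ v i) (hA' : ∀ i ∉ A, v i ≤ θ) (hcard : s.card = A.card) :
    ∑ i ∈ s, v i ≤ ∑ i ∈ A, v i := by
  have h1 : ∑ i ∈ s \ A, v i ≤ (s \ A).card • θ :=
    Finset.sum_le_card_nsmul _ _ _ fun i hi => hA' i (Finset.mem_sdiff.mp hi).2
  have h2 : (A \ s).card • θ ≤ ∑ i ∈ A \ s, v i :=
    Finset.card_nsmul_le_sum _ _ _ fun i hi => hA i (Finset.mem_sdiff.mp hi).1
  have e1 := Finset.card_sdiff_add_card_inter s A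
  have e2 := Finset.card_sdiff_add_card_inter A s
  have e3 : (s ∩ A).card = (A ∩ s).card := by rw [Finset.inter_comm]
  have hc : (s \ A).card = (A \ s).card := by omega
  rw [hc] at h1
  calc ∑ i ∈ s, v i = ∑ i ∈ s ∩ A, v i + ∑ i ∈ s \ A, v i :=
        (Finset.sum_inter_add_sum_sdiff s A v).symm
    _ ≤ ∑ i ∈ s ∩ A, v i + ∑ i ∈ A \ s, v i := by
        exact add_le_add_right (h1.trans h2) _
    _ = ∑ i ∈ A ∩ s, v i + ∑ i ∈ A \ s, v i := by rw [Finset.inter_comm]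
    _ = ∑ i ∈ A, v i := Finset.sum_inter_add_sum_sdiff A s v

lemma eSum_eq_of_threshold {ι : Type} [Fintype ι] (v : ι → ℝ) (A : Finset ι) (θ : ℝ)
    (hA : ∀ i ∈ A, θ ≤ v i) (hA' : ∀ i ∉ A, v i ≤ θ) :
    eSum v A.card = ∑ i ∈ A, v i := by
  classical
  refine le_antisymm (csSup_le ⟨_, A, rfl, rfl⟩ ?_) (le_eSum v A)
  rintro x ⟨s, hs, rfl⟩
  exact sum_le_sum_of_threshold v A s θ hA hA' hs

/-- converse direction: if tensoring with `χ` preserves strict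
majorization into `φ` (and some strictly majorized `ψ` exists), then
`l_u(χ) > g_u(φ)`. -/
theorem lu_gt_gu_of_strict_majorization_tensor {n k : ℕ}
    (hn : 2 ≤ n) (hk : 2 ≤ k)
    (φ : Fin n → ℝ) (χ : Fin k → ℝ)
    (hφprob : IsProb φ) (hχprob : IsProb χ)
    (hφpos : ∀ i, 0 < φ i) (hχpos : ∀ i, 0 < χ i)
    (hexists : ∃ ψ : Fin n → ℝ, SMaj ψ φ)
    (hall : ∀ ψ : Fin n → ℝ, SMaj ψ φ → SMaj (tens ψ χ) (tens φ χ)) :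
    gu φ < lu χ := by
  by_contra hcon
  push_neg at hcon
  obtain ⟨ψ, hψ⟩ := hexists
  have : Nonempty (Fin n) := ⟨⟨0, by omega⟩⟩
  have hψsum : ∑ i, ψ i = 1 := hψ.2.trans hφprob.2
  -- extremes of φ
  have hrφ : (Set.range φ).Finite := Set.finite_range φ
  have hrφne : (Set.range φ).Nonempty := Set.range_nonempty φ
  obtain ⟨i1, hi1⟩ := hrφne.csSup_mem hrφ
  obtain ⟨i0, hi0⟩ := hrφne.csInf_mem hrφ
  have hub : ∀ i, φ i ≤ φ i1 := fun i => hi1 ▸ le_csSup hrφ.bddAbove ⟨i, rfl⟩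
  have hlb : ∀ i, φ i0 ≤ φ i := fun i => hi0 ▸ csInf_le hrφ.bddBelow ⟨i, rfl⟩
  have hgu : gu φ = φ i0 / φ i1 := by rw [gu, ← hi0, ← hi1]
  by_cases hχc : ∃ a b : Fin k, χ a ≠ χ b
  · -- χ is not constant
    have hlu : lu χ = sInf (ratioSet χ) := by rw [lu, if_pos hχc]
    -- ratioSet is nonempty: take a maximizing χ, b maximizing χ below χ a
    obtain ⟨a0, b0, hab0⟩ := hχc
    obtain ⟨a, _, ha⟩ := Finset.exists_max_image (Finset.univ : Finset (Fin k)) χ ⟨a0, Finset.mem_univ a0⟩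
    have hlt : ∃ c : Fin k, χ c < χ a := by
      rcases lt_or_ge (χ a0) (χ b0) with h | h
      · exact ⟨a0, lt_of_lt_of_le h (ha b0 (Finset.mem_univ b0))⟩
      · rcases h.lt_or_eq with h | h
        · exact ⟨b0, lt_of_lt_of_le h (ha a0 (Finset.mem_univ a0))⟩
        · exact absurd h.symm hab0
    obtain ⟨c0, hc0⟩ := hlt
    obtain ⟨b, hbmem, hb⟩ := Finset.exists_max_image
      (Finset.univ.filter fun c => χ c < χ a) χ ⟨c0, by simp [hc0]⟩
    have hba : χ b < χ a := (Finset.mem_filter.mp hbmem).2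
    have hnoc : ¬ ∃ c : Fin k, χ b < χ c ∧ χ c < χ a := by
      rintro ⟨c, hc1, hc2⟩
      exact absurd (hb c (by simp [hc2])) (not_le.mpr hc1)
    have hmem : (χ b / χ a) ∈ ratioSet χ := ⟨a, b, hba, hnoc, rfl⟩
    have hfin : (ratioSet χ).Finite := by
      apply Set.Finite.subset (Set.finite_range fun p : Fin k × Fin k => χ p.2 / χ p.1)
      rintro x ⟨a', b', _, _, rfl⟩; exact ⟨(a', b'), rfl⟩
    obtain ⟨a', b', hba', hnoc', hr'⟩ := Set.Nonempty.csInf_mem ⟨_, hmem⟩ hfin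
    have hcon' : χ b' / χ a' ≤ φ i0 / φ i1 := by
      rw [← hr', ← hgu, ← hlu]; exact hcon
    have hcross : χ b' * φ i1 ≤ φ i0 * χ a' :=
      (div_le_div_iff₀ (hχpos a') (hφpos i1)).mp hcon'
    -- the threshold set
    set J : Finset (Fin k) := Finset.univ.filter (fun j => χ a' ≤ χ j) with hJ
    set A : Finset (Fin n × Fin k) := Finset.univ ×ˢ J with hA
    have hmemA : ∀ p : Fin n × Fin k, p ∈ A ↔ χ a' ≤ χ p.2 := by
      intro p; simp [hA, hJ, Finset.mem_product]
    have hhi : ∀ p ∈ A, φ i0 * χ a' ≤ tens φ χ p := by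
      intro p hp
      exact mul_le_mul (hlb p.1) ((hmemA p).mp hp) (hχpos a').le (hφpos p.1).le
    have hlo : ∀ p ∉ A, tens φ χ p ≤ φ i0 * χ a' := by
      intro p hp
      have h2 : χ p.2 < χ a' := not_le.mp (fun h => hp ((hmemA p).mpr h))
      have h3 : χ p.2 ≤ χ b' := by
        by_contra h
        exact hnoc' ⟨p.2, not_le.mp h, h2⟩
      calc tens φ χ p = φ p.1 * χ p.2 := rfl
        _ ≤ φ i1 * χ b' :=
            mul_le_mul (hub p.1) h3 (hχpos p.2).le (hφpos i1).le
        _ = χ b' * φ i1 := mul_comm _ _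
        _ ≤ φ i0 * χ a' := hcross
    have hsumA : ∀ w : Fin n → ℝ, ∑ p ∈ A, tens w χ p = (∑ i, w i) * ∑ j ∈ J, χ j := by
      intro w
      rw [hA, Finset.sum_product]
      simp only [tens]
      rw [← Finset.sum_mul_sum]
    have heq : eSum (tens φ χ) A.card = ∑ p ∈ A, tens φ χ p :=
      eSum_eq_of_threshold _ A (φ i0 * χ a') hhi hlo
    have hle : ∑ p ∈ A, tens ψ χ p ≤ eSum (tens ψ χ) A.card := le_eSum _ A
    have hsame : ∑ p ∈ A, tens ψ χ p = ∑ p ∈ A, tens φ χ p := by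
      rw [hsumA, hsumA, hψsum, hφprob.2]
    have hm1 : 1 ≤ A.card := by
      refine Finset.card_pos.mpr ⟨(i0, a'), ?_⟩
      exact (hmemA _).mpr le_rfl
    have hm2 : A.card < Fintype.card (Fin n × Fin k) := by
      rw [← Finset.card_univ]
      refine Finset.card_lt_card ?_
      rw [Finset.ssubset_univ_iff]
      intro h
      have : (i0, b') ∈ A := h ▸ Finset.mem_univ _
      exact absurd ((hmemA _).mp this) (not_le.mpr hba')
    have hstrict := (hall ψ hψ).1 A.card hm1 hm2
    rw [heq] at hstrict
    rw [hsame] at hle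
    linarith
  · -- χ constant: lu χ = 1, so φ must be constant, contradicting hψ
    have hlu : lu χ = 1 := by rw [lu, if_neg hχc]
    rw [hlu, hgu] at hcon
    have h10 : φ i1 ≤ φ i0 := by
      have := (one_le_div (hφpos i1)).mp hcon
      linarith
    have hconstφ : ∀ i, φ i = φ i0 := fun i => le_antisymm ((hub i).trans h10) (hlb i)
    have heq1 : eSum φ 1 = φ i0 := by
      have := eSum_eq_of_threshold φ {i0} (φ i0)
        (fun i hi => (hconstφ i).ge) (fun i hi => (hconstφ i).le)
      simpa using this
    have hlt1 : eSum ψ 1 < φ i0 := by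
      have := hψ.1 1 le_rfl (by simp [Fintype.card_fin]; omega)
      rwa [heq1] at this
    have hle1 : ∀ i, ψ i ≤ eSum ψ 1 := by
      intro i
      have := le_eSum ψ {i}
      simpa using this
    have hsum : (1 : ℝ) = ∑ i, φ i := hφprob.2.symm
    have h1 : (1 : ℝ) = (n : ℝ) * φ i0 := by
      rw [hsum]
      rw [Finset.sum_congr rfl (fun i _ => hconstφ i)]
      simp [mul_comm]
    have h2 : (1 : ℝ) ≤ (n : ℝ) * eSum ψ 1 := by
      calc (1 : ℝ) = ∑ i, ψ i := hψsum.symm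
        _ ≤ ∑ _i : Fin n, eSum ψ 1 := Finset.sum_le_sum fun i _ => hle1 i
        _ = (n : ℝ) * eSum ψ 1 := by simp [mul_comm]
    have hn0 : (0 : ℝ) < n := by positivity
    nlinarith
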